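/- arXiv:1809.06051 — 2 statements merged into one kernel-verified Lean document; each statement's English description precedes it below -/
import Mathlib

section
/- Let Φ = {φ_i}_{i∈I} and Ψ = {ψ_i}_{i∈I} be (ordinary) Bessel sequences in H. For each i set W_i := span{ψ_i}, V_i := span{φ_i}, ω_i := ‖ψ_i‖, υ_i := ‖φ_i‖, and define R_i ∈ B(H) by R_i x := ⟨x, ψ_i/‖ψ_i‖⟩ φ_i/‖φ_i‖ when φ_i ≠ 0 and ψ_i ≠ 0, and R_i := 0 otherwise. Then (W,ω) and (V,υ) are Bessel fusion sequences, R = {R_i} ∈ ℓ∞(I,B(H)) with ‖R_i‖ ≤ 1, and for every m ∈ ℓ∞(I) and every x ∈ H one has M_{mR,V,W} x = Σ_{i∈I} m_i ⟨x, ψ_i⟩ φ_i; that is, the (m,R)-Bessel fusion multiplier equals the ordinary Bessel multiplier M_{m,Φ,Ψ}. -/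
noncomputable section

open ContinuousLinearMap
open scoped Classical

/-- Orthogonal projection onto a closed subspace, as an operator on `H`. -/
def fproj {H : Type*} [NormedAddCommGroup H] [InnerProductSpace ℂ H] [CompleteSpace H]
    (W : Submodule ℂ H) (hW : IsClosed (W : Set H)) : H →L[ℂ] H :=
  haveI : CompleteSpace W := hW.completeSpace_coe
  W.subtypeL.comp W.orthogonalProjection

lemma fproj_span_apply {H : Type*} [NormedAddCommGroup H] [InnerProductSpace ℂ H]
    [CompleteSpace H] (v : H) (W : Submodule ℂ H) (hWeq : W = Submodule.span ℂ {v})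
    (hW : IsClosed (W : Set H)) (x : H) :
    fproj W hW x = ((inner ℂ v x : ℂ) / ((‖v‖ ^ 2 : ℝ) : ℂ)) • v := by
  subst hWeq
  haveI : CompleteSpace (Submodule.span ℂ {v}) := hW.completeSpace_coe
  show ((Submodule.span ℂ {v}).starProjection x) = _
  exact Submodule.starProjection_singleton (𝕜 := ℂ) x

/-- (m,R)-Bessel fusion multipliers generalize ordinary Bessel multipliers.
Given Bessel sequences `Φ, Ψ`, with `W_i = span{ψ_i}`, `V_i = span{φ_i}`, `ω_i = ‖ψ_i‖`,
`υ_i = ‖φ_i‖` and the rank-one operators `R_i x = ⟨x, ψ_i/‖ψ_i‖⟩ φ_i/‖φ_i‖` (and `R_i = 0`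
if `φ_i = 0` or `ψ_i = 0`), the fusion sequences `(W,ω)` and `(V,υ)` are Bessel fusion
sequences, `‖R_i‖ ≤ 1`, and the multiplier `M_{mR,V,W}` coincides (termwise, hence as a sum)
with the ordinary Bessel multiplier `x ↦ Σ_i m_i ⟨x,ψ_i⟩ φ_i`. -/
theorem besselFusionMultiplier_of_ordinary_bessel
    {H : Type*} [NormedAddCommGroup H] [InnerProductSpace ℂ H] [CompleteSpace H]
    [TopologicalSpace.SeparableSpace H]
    {I : Type*} [Countable I]
    (Φ Ψ : I → H) (βΦ βΨ : ℝ)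
    (hΦ : ∀ x : H, ∃ s : ℝ, HasSum (fun i => ‖(inner ℂ x (Φ i) : ℂ)‖ ^ 2) s ∧ s ≤ βΦ * ‖x‖ ^ 2)
    (hΨ : ∀ x : H, ∃ s : ℝ, HasSum (fun i => ‖(inner ℂ x (Ψ i) : ℂ)‖ ^ 2) s ∧ s ≤ βΨ * ‖x‖ ^ 2)
    (W V : I → Submodule ℂ H) (ω υ : I → ℝ)
    (hWdef : ∀ i, W i = Submodule.span ℂ {Ψ i}) (hVdef : ∀ i, V i = Submodule.span ℂ {Φ i})
    (hW : ∀ i, IsClosed ((W i) : Set H)) (hV : ∀ i, IsClosed ((V i) : Set H))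
    (hωdef : ∀ i, ω i = ‖Ψ i‖) (hυdef : ∀ i, υ i = ‖Φ i‖)
    (R : I → H →L[ℂ] H)
    (hRdef : ∀ i, R i = if _h : Φ i ≠ 0 ∧ Ψ i ≠ 0 then
      (innerSL ℂ (‖Ψ i‖⁻¹ • Ψ i)).smulRight (‖Φ i‖⁻¹ • Φ i) else 0) :
    -- (W,ω) and (V,υ) are fusion sequences and Bessel fusion sequences
    (∀ i, 0 ≤ ω i ∧ (ω i = 0 ↔ W i = ⊥)) ∧
    (∀ i, 0 ≤ υ i ∧ (υ i = 0 ↔ V i = ⊥)) ∧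
    (∀ x : H, ∃ s : ℝ,
      HasSum (fun i => ω i ^ 2 * ‖fproj (W i) (hW i) x‖ ^ 2) s ∧ s ≤ βΨ * ‖x‖ ^ 2) ∧
    (∀ x : H, ∃ s : ℝ,
      HasSum (fun i => υ i ^ 2 * ‖fproj (V i) (hV i) x‖ ^ 2) s ∧ s ≤ βΦ * ‖x‖ ^ 2) ∧
    -- R ∈ ℓ∞(I,B(H)) with ‖R_i‖ ≤ 1
    (∀ i, ‖R i‖ ≤ 1) ∧
    -- the (m,R)-fusion multiplier coincides with the ordinary multiplier, termwise and as a sum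
    (∀ m : I → ℂ, ∀ x : H, ∀ i : I,
      m i • (υ i * ω i) • fproj (V i) (hV i) ((R i) (fproj (W i) (hW i) x))
        = m i • (inner ℂ (Ψ i) x : ℂ) • Φ i) ∧
    (∀ m : I → ℂ, ∀ x : H,
      ∑' i, m i • (υ i * ω i) • fproj (V i) (hV i) ((R i) (fproj (W i) (hW i) x))
        = ∑' i, m i • (inner ℂ (Ψ i) x : ℂ) • Φ i) := by
  -- key computation for the norms of the projections
  have key : ∀ (v : H) (Wv : Submodule ℂ H) (hWeq : Wv = Submodule.span ℂ {v})
      (hWc : IsClosed (Wv : Set H)) (x : H),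
      ‖v‖ ^ 2 * ‖fproj Wv hWc x‖ ^ 2 = ‖(inner ℂ x v : ℂ)‖ ^ 2 := by
    intro v Wv hWeq hWc x
    rw [fproj_span_apply v Wv hWeq hWc x]
    by_cases hv : v = 0
    · simp [hv]
    have hv' : ‖v‖ ≠ 0 := norm_ne_zero_iff.mpr hv
    rw [norm_smul, norm_div, norm_inner_symm]
    have : ‖(((‖v‖ ^ 2 : ℝ)) : ℂ)‖ = ‖v‖ ^ 2 := by
      rw [Complex.norm_real]; exact abs_of_nonneg (by positivity)
    rw [this]
    field_simp
  have hspan_bot : ∀ v : H, Submodule.span ℂ {v} = ⊥ ↔ v = 0 := by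
    intro v; exact Submodule.span_singleton_eq_bot
  refine ⟨?_, ?_, ?_, ?_, ?_, ?_, ?_⟩
  · intro i
    refine ⟨by rw [hωdef]; positivity, ?_⟩
    rw [hωdef, hWdef, norm_eq_zero, hspan_bot]
  · intro i
    refine ⟨by rw [hυdef]; positivity, ?_⟩
    rw [hυdef, hVdef, norm_eq_zero, hspan_bot]
  · intro x
    obtain ⟨s, hs, hsle⟩ := hΨ x
    refine ⟨s, ?_, hsle⟩
    convert hs using 2 with i
    rw [hωdef]
    exact key (Ψ i) (W i) (hWdef i) (hW i) x
  · intro x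
    obtain ⟨s, hs, hsle⟩ := hΦ x
    refine ⟨s, ?_, hsle⟩
    convert hs using 2 with i
    rw [hυdef]
    exact key (Φ i) (V i) (hVdef i) (hV i) x
  · intro i
    rw [hRdef i]
    split_ifs with h
    · obtain ⟨hφ, hψ⟩ := h
      rw [norm_smulRight_apply, innerSL_apply_norm, norm_smul, norm_smul,
        norm_inv, norm_norm, norm_inv, norm_norm,
        inv_mul_cancel₀ (norm_ne_zero_iff.mpr hψ),
        inv_mul_cancel₀ (norm_ne_zero_iff.mpr hφ)]
      simp
    · simp
  · intro m x i
    by_cases h : Φ i ≠ 0 ∧ Ψ i ≠ 0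
    · obtain ⟨hφ, hψ⟩ := h
      have hφ' : ‖Φ i‖ ≠ 0 := norm_ne_zero_iff.mpr hφ
      have hψ' : ‖Ψ i‖ ≠ 0 := norm_ne_zero_iff.mpr hψ
      simp only [hRdef i, dif_pos (And.intro hφ hψ),
        fproj_span_apply (Ψ i) (W i) (hWdef i) (hW i),
        fproj_span_apply (Φ i) (V i) (hVdef i) (hV i),
        smulRight_apply, innerSL_apply_apply, RCLike.real_smul_eq_coe_smul (K := ℂ),
        inner_smul_left, inner_smul_right, inner_self_eq_norm_sq_to_K, map_inv₀,
        Complex.conj_ofReal, hυdef, hωdef, smul_smul]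
      congr 1
      have hφc : ((‖Φ i‖ : ℝ) : ℂ) ≠ 0 := by exact_mod_cast hφ'
      have hψc : ((‖Ψ i‖ : ℝ) : ℂ) ≠ 0 := by exact_mod_cast hψ'
      simp only [Complex.coe_algebraMap, Complex.conj_ofReal]
      push_cast
      field_simp
    · have hR0 : R i = 0 := by rw [hRdef i, dif_neg h]
      rw [hR0]
      rcases not_and_or.mp h with h1 | h1 <;> rw [not_not] at h1
      · simp [h1]
      · simp [h1]
  · intro m x
    apply tsum_congr
    intro i
    -- reuse the termwise statement proved above (re-derive it)
    by_cases h : Φ i ≠ 0 ∧ Ψ i ≠ 0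
    · obtain ⟨hφ, hψ⟩ := h
      have hφ' : ‖Φ i‖ ≠ 0 := norm_ne_zero_iff.mpr hφ
      have hψ' : ‖Ψ i‖ ≠ 0 := norm_ne_zero_iff.mpr hψ
      simp only [hRdef i, dif_pos (And.intro hφ hψ),
        fproj_span_apply (Ψ i) (W i) (hWdef i) (hW i),
        fproj_span_apply (Φ i) (V i) (hVdef i) (hV i),
        smulRight_apply, innerSL_apply_apply, RCLike.real_smul_eq_coe_smul (K := ℂ),
        inner_smul_left, inner_smul_right, inner_self_eq_norm_sq_to_K, map_inv₀,
        Complex.conj_ofReal, hυdef, hωdef, smul_smul]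
      congr 1
      have hφc : ((‖Φ i‖ : ℝ) : ℂ) ≠ 0 := by exact_mod_cast hφ'
      have hψc : ((‖Ψ i‖ : ℝ) : ℂ) ≠ 0 := by exact_mod_cast hψ'
      simp only [Complex.coe_algebraMap, Complex.conj_ofReal]
      push_cast
      field_simp
    · have hR0 : R i = 0 := by rw [hRdef i, dif_neg h]
      rw [hR0]
      rcases not_and_or.mp h with h1 | h1 <;> rw [not_not] at h1
      · simp [h1]
      · simp [h1]
end
end

section
/- Let A = {A_i}_{i∈I} be an operator-valued frame of bounded operators H → K. If B = {B_i}_{i∈I} is an operator-valued Bessel sequence of operators H → K such that T*_B(T_A S_A^{-1} + L) = 0 for every L ∈ L_A := {L ∈ B(H,𝔎) : L*T_A = 0}, then B_i = 0 for all i ∈ I. -/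
noncomputable section

open ContinuousLinearMap

set_option maxHeartbeats 1000000 in
/-- Let `A` be an operator-valued frame with analysis operator `T`, frame
operator `S = T*T` (with inverse `Sinv`). If `B` is an operator-valued Bessel sequence
(with analysis operator `TB`) such that `TB* (T S⁻¹ + L) = 0` for every
`L ∈ L_A = {L : adjoint L ∘ T = 0}`, then `B_i = 0` for all `i`. -/
theorem operatorValuedBessel_orthogonal_to_all_duals_eq_zero
    {H K : Type*} [NormedAddCommGroup H] [InnerProductSpace ℂ H] [CompleteSpace H]
    [NormedAddCommGroup K] [InnerProductSpace ℂ K] [CompleteSpace K]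
    [TopologicalSpace.SeparableSpace H] [TopologicalSpace.SeparableSpace K]
    {I : Type*} [Countable I]
    (A : I → H →L[ℂ] K)
    (α β : ℝ) (hα : 0 < α)
    (hframe : ∀ x : H, ∃ s : ℝ,
      HasSum (fun i => ‖A i x‖ ^ 2) s ∧ α * ‖x‖ ^ 2 ≤ s ∧ s ≤ β * ‖x‖ ^ 2)
    -- the analysis operator of A
    (T : H →L[ℂ] lp (fun _ : I => K) 2)
    (hT : ∀ (x : H) (i : I), T x i = A i x)
    -- the frame operator S_A = T_A* T_A and its inverse
    (Sinv : H →L[ℂ] H)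
    (hSinv : (ContinuousLinearMap.adjoint T ∘L T) ∘L Sinv = 1 ∧
             Sinv ∘L (ContinuousLinearMap.adjoint T ∘L T) = 1)
    -- B is an operator-valued Bessel sequence with analysis operator TB
    (B : I → H →L[ℂ] K) (βB : ℝ)
    (hB : ∀ x : H, ∃ s : ℝ, HasSum (fun i => ‖B i x‖ ^ 2) s ∧ s ≤ βB * ‖x‖ ^ 2)
    (TB : H →L[ℂ] lp (fun _ : I => K) 2)
    (hTB : ∀ (x : H) (i : I), TB x i = B i x)
    -- TB* (T S⁻¹ + L) = 0 for every L ∈ L_A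
    (hOrth : ∀ L : H →L[ℂ] lp (fun _ : I => K) 2,
      ContinuousLinearMap.adjoint L ∘L T = 0 →
      ContinuousLinearMap.adjoint TB ∘L (T ∘L Sinv + L) = 0) :
    ∀ i, B i = 0 := by
  -- Step 1: with L = 0, TB* (T Sinv) = 0
  have h0 : ContinuousLinearMap.adjoint TB ∘L (T ∘L Sinv) = 0 := by
    have := hOrth 0 (by simp)
    simpa using this
  -- Step 2: TB* T = 0
  have h1 : ContinuousLinearMap.adjoint TB ∘L T = 0 := by
    have := congrArg (fun X => X ∘L (ContinuousLinearMap.adjoint T ∘L T)) h0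
    simp only [ContinuousLinearMap.comp_assoc, hSinv.2, zero_comp] at this
    simpa [ContinuousLinearMap.one_def] using this
  -- Step 3: L := TB - (T Sinv)(T* TB) lies in L_A
  set L : H →L[ℂ] lp (fun _ : I => K) 2 :=
    TB - (T ∘L Sinv) ∘L (ContinuousLinearMap.adjoint T ∘L TB) with hL
  have hA : ContinuousLinearMap.adjoint L = ContinuousLinearMap.adjoint TB -
      (ContinuousLinearMap.adjoint TB ∘L T) ∘L
        (ContinuousLinearMap.adjoint Sinv ∘L ContinuousLinearMap.adjoint T) := by
    rw [hL, map_sub, ContinuousLinearMap.adjoint_comp, ContinuousLinearMap.adjoint_comp,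
      ContinuousLinearMap.adjoint_comp, ContinuousLinearMap.adjoint_adjoint,
      ContinuousLinearMap.comp_assoc]
  have hLmem : ContinuousLinearMap.adjoint L ∘L T = 0 := by
    rw [hA, sub_comp, h1]
    simp
  -- Step 4: TB* TB = 0
  have h2 : ContinuousLinearMap.adjoint TB ∘L TB = 0 := by
    have h := hOrth L hLmem
    rw [hL, comp_add, comp_sub, h0] at h
    rw [← ContinuousLinearMap.comp_assoc, h0, zero_comp] at h
    simpa using h
  -- Step 5: TB = 0 pointwise
  have hTB0 : ∀ x : H, TB x = 0 := by
    intro x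
    have hz : ContinuousLinearMap.adjoint TB (TB x) = 0 := by
      have := ContinuousLinearMap.ext_iff.mp h2 x
      simp only [ContinuousLinearMap.comp_apply, ContinuousLinearMap.zero_apply] at this
      exact this
    have : (inner ℂ (TB x) (TB x) : ℂ) = 0 := by
      rw [← ContinuousLinearMap.adjoint_inner_left, hz]
      simp
    exact inner_self_eq_zero.mp this
  intro i
  ext x
  have := hTB x i
  rw [hTB0 x] at this
  simpa using this.symm
end
end
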